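/- Let p and q be polynomials in one variable with nonnegative real coefficients such that the coefficient sequence of each is log-concave and has no internal zeros (i.e. the nonzero coefficients occur on a contiguous range of degrees, and a_{i}^2 >= a_{i-1} a_{i+1} for all i). Then the coefficient sequence of the product p*q is also log-concave with no internal zeros. -/
import Mathlib

open Polynomial Finset

/-- All coefficients of the polynomial `p` are nonnegative. -/
def HasNonnegCoeffs (p : Polynomial ℝ) : Prop :=
  ∀ i, 0 ≤ p.coeff i

/-- The coefficient sequence of `p` is log-concave: `a_i² ≥ a_{i-1} a_{i+1}` for all
internal indices `i`. -/
def HasLogConcaveCoeffs (p : Polynomial ℝ) : Prop :=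
  ∀ i, 0 < i → p.coeff (i - 1) * p.coeff (i + 1) ≤ p.coeff i ^ 2

/-- The coefficient sequence of `p` has no internal zeros: whenever the coefficients in
degrees `i < k` are nonzero and `i < j < k`, the coefficient in degree `j` is also
nonzero; i.e. the nonzero coefficients occur on a contiguous range of degrees. -/
def HasNoInternalZeros (p : Polynomial ℝ) : Prop :=
  ∀ i j k, i < j → j < k → p.coeff i ≠ 0 → p.coeff k ≠ 0 → p.coeff j ≠ 0


private lemma between_ne (a : ℕ → ℝ)
    (h2 : ∀ i j k, i < j → j < k → a i ≠ 0 → a k ≠ 0 → a j ≠ 0)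
    {s t u : ℕ} (hs : a s ≠ 0) (ht : a t ≠ 0)
    (h : min s t ≤ u) (h' : u ≤ max s t) : a u ≠ 0 := by
  rcases le_total s t with h1 | h1
  · rw [min_eq_left h1] at h; rw [max_eq_right h1] at h'
    rcases eq_or_lt_of_le h with rfl | h
    · exact hs
    rcases eq_or_lt_of_le h' with rfl | h'
    · exact ht
    exact h2 s u t h h' hs ht
  · rw [min_eq_right h1] at h; rw [max_eq_left h1] at h'
    rcases eq_or_lt_of_le h with rfl | h
    · exact ht
    rcases eq_or_lt_of_le h' with rfl | h'
    · exact hs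
    exact h2 t u s h h' ht hs

private lemma nat_step (a : ℕ → ℝ) (h0 : ∀ i, 0 ≤ a i)
    (h1 : ∀ i, 0 < i → a (i - 1) * a (i + 1) ≤ a i ^ 2)
    (h2 : ∀ i j k, i < j → j < k → a i ≠ 0 → a k ≠ 0 → a j ≠ 0) :
    ∀ k m : ℕ, a m * a (m + k + 1) ≤ a (m + 1) * a (m + k) := by
  intro k
  induction k with
  | zero => intro m; simp [mul_comm]
  | succ k IH =>
    intro m
    rw [show m + (k+1) + 1 = m + k + 2 from by ring, show m + (k+1) = m + k + 1 from by ring]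
    rcases eq_or_ne (a m) 0 with hm | hm
    · rw [hm, zero_mul]; exact mul_nonneg (h0 _) (h0 _)
    rcases eq_or_ne (a (m + k + 2)) 0 with he | he
    · rw [he, mul_zero]; exact mul_nonneg (h0 _) (h0 _)
    have hmk : a (m + k) ≠ 0 := by
      rcases Nat.eq_zero_or_pos k with rfl | hk
      · simpa using hm
      · exact h2 m (m+k) (m+k+2) (by omega) (by omega) hm he
    have hmk1 : a (m + k + 1) ≠ 0 := h2 m (m+k+1) (m+k+2) (by omega) (by omega) hm he
    have pk : 0 < a (m+k) := (h0 _).lt_of_ne (Ne.symm hmk)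
    have pk1 : 0 < a (m+k+1) := (h0 _).lt_of_ne (Ne.symm hmk1)
    have lc := h1 (m+k+1) (by omega)
    rw [Nat.add_sub_cancel, show m + k + 1 + 1 = m + k + 2 from rfl] at lc
    have ih := IH m
    nlinarith [mul_le_mul_of_nonneg_left lc (h0 m), mul_le_mul_of_nonneg_right ih pk1.le]

private lemma nat_strong (a : ℕ → ℝ) (h0 : ∀ i, 0 ≤ a i)
    (h1 : ∀ i, 0 < i → a (i - 1) * a (i + 1) ≤ a i ^ 2)
    (h2 : ∀ i j k, i < j → j < k → a i ≠ 0 → a k ≠ 0 → a j ≠ 0) :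
    ∀ d e w : ℕ, a w * a (w + d + e + d) ≤ a (w + d) * a (w + d + e) := by
  intro d
  induction d with
  | zero => intro e w; simp
  | succ d IH =>
    intro e w
    calc a w * a (w + (d+1) + e + (d+1))
        = a w * a (w + (2*d+e+1) + 1) := by rw [show w + (d+1) + e + (d+1) = w + (2*d+e+1) + 1 from by ring]
      _ ≤ a (w+1) * a (w + (2*d+e+1)) := nat_step a h0 h1 h2 (2*d+e+1) w
      _ = a (w+1) * a ((w+1) + d + e + d) := by rw [show w + (2*d+e+1) = (w+1) + d + e + d from by ring]
      _ ≤ a ((w+1)+d) * a ((w+1)+d+e) := IH e (w+1)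
      _ = a (w + (d+1)) * a (w + (d+1) + e) := by rw [show (w+1)+d = w + (d+1) from by ring]


private def pext (p : Polynomial ℝ) : ℤ → ℝ := fun m => if 0 ≤ m then p.coeff m.toNat else 0

private lemma pext_nat (p : Polynomial ℝ) (s : ℕ) : pext p s = p.coeff s := by
  simp [pext]

private lemma pext_neg (p : Polynomial ℝ) {m : ℤ} (h : m < 0) : pext p m = 0 :=
  if_neg (not_le.2 h)

private lemma pext_nonneg (p : Polynomial ℝ) (h0 : ∀ i, 0 ≤ p.coeff i) (m : ℤ) :
    0 ≤ pext p m := by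
  unfold pext; split
  · exact h0 _
  · exact le_rfl


private lemma pext_strong (p : Polynomial ℝ) (h0 : ∀ i, 0 ≤ p.coeff i)
    (h1 : ∀ i, 0 < i → p.coeff (i - 1) * p.coeff (i + 1) ≤ p.coeff i ^ 2)
    (h2 : ∀ i j k, i < j → j < k → p.coeff i ≠ 0 → p.coeff k ≠ 0 → p.coeff j ≠ 0) :
    ∀ w x y z : ℤ, w ≤ x → x ≤ y → y ≤ z → w + z = x + y →
      pext p w * pext p z ≤ pext p x * pext p y := by
  intro w x y z hwx hxy hyz hsum
  by_cases hw : 0 ≤ w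
  · have hx : 0 ≤ x := le_trans hw hwx
    have hy : 0 ≤ y := le_trans hx hxy
    have hz : 0 ≤ z := le_trans hy hyz
    have key := nat_strong p.coeff h0 h1 h2 (x - w).toNat (y - x).toNat w.toNat
    rw [show w.toNat + (x-w).toNat + (y-x).toNat + (x-w).toNat = z.toNat from by omega,
        show w.toNat + (x-w).toNat + (y-x).toNat = y.toNat from by omega,
        show w.toNat + (x-w).toNat = x.toNat from by omega] at key
    simpa [pext, hw, hx, hy, hz] using key
  · rw [pext_neg p (not_le.1 hw), zero_mul]
    exact mul_nonneg (pext_nonneg p h0 x) (pext_nonneg p h0 y)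

private lemma det_nonneg (A B : ℤ → ℝ)
    (hA : ∀ w x y z : ℤ, w ≤ x → x ≤ y → y ≤ z → w + z = x + y → A w * A z ≤ A x * A y)
    (hB : ∀ w x y z : ℤ, w ≤ x → x ≤ y → y ≤ z → w + z = x + y → B w * B z ≤ B x * B y)
    (T : Finset ℕ) (n : ℤ) :
    (∑ s ∈ T, A s * B (n + 1 - s)) * (∑ s ∈ T, A ((s:ℤ) - 1) * B (n - s)) ≤
    (∑ s ∈ T, A s * B (n - s)) * (∑ s ∈ T, A ((s:ℤ) - 1) * B (n + 1 - s)) := by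
  set X : ℕ → ℕ → ℝ := fun s t =>
    A s * A ((t:ℤ) - 1) * (B (n - s) * B (n + 1 - t) - B (n + 1 - s) * B (n - t)) with hX
  have key0 : ∀ s t : ℕ, s < t → 0 ≤ X s t + X t s := by
    intro s t h
    have hst : (s:ℤ) < t := by exact_mod_cast h
    have fA : A ((s:ℤ) - 1) * A t ≤ A s * A ((t:ℤ) - 1) :=
      hA ((s:ℤ)-1) s ((t:ℤ)-1) t (by linarith) (by omega) (by linarith) (by ring)
    have fB : B (n - t) * B (n + 1 - s) ≤ B (n + 1 - t) * B (n - s) :=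
      hB (n - t) (n + 1 - t) (n - s) (n + 1 - s) (by linarith) (by omega) (by linarith) (by ring)
    have expand : X s t + X t s =
        (A s * A ((t:ℤ) - 1) - A ((s:ℤ) - 1) * A t) *
          (B (n + 1 - t) * B (n - s) - B (n - t) * B (n + 1 - s)) := by
      simp only [hX]; ring
    rw [expand]
    exact mul_nonneg (sub_nonneg.2 fA) (sub_nonneg.2 fB)
  have key : ∀ s t : ℕ, 0 ≤ X s t + X t s := by
    intro s t
    rcases lt_trichotomy s t with h | rfl | h
    · exact key0 s t h
    · have : X s s + X s s = 0 := by simp only [hX]; ring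
      rw [this]
    · rw [add_comm]; exact key0 t s h
  have expand1 :
      (∑ s ∈ T, A s * B (n - s)) * (∑ t ∈ T, A ((t:ℤ) - 1) * B (n + 1 - t))
        - (∑ s ∈ T, A s * B (n + 1 - s)) * (∑ t ∈ T, A ((t:ℤ) - 1) * B (n - t))
      = ∑ s ∈ T, ∑ t ∈ T, X s t := by
    rw [Finset.sum_mul_sum, Finset.sum_mul_sum, ← Finset.sum_sub_distrib]
    refine Finset.sum_congr rfl fun s _ => ?_
    rw [← Finset.sum_sub_distrib]
    refine Finset.sum_congr rfl fun t _ => ?_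
    simp only [hX]; ring
  have h2 : 0 ≤ ∑ s ∈ T, ∑ t ∈ T, (X s t + X t s) :=
    Finset.sum_nonneg fun s _ => Finset.sum_nonneg fun t _ => key s t
  have hsplit : ∑ s ∈ T, ∑ t ∈ T, (X s t + X t s)
      = (∑ s ∈ T, ∑ t ∈ T, X s t) + (∑ s ∈ T, ∑ t ∈ T, X t s) := by
    rw [← Finset.sum_add_distrib]
    exact Finset.sum_congr rfl fun s _ => Finset.sum_add_distrib
  have hcomm : (∑ s ∈ T, ∑ t ∈ T, X t s) = ∑ s ∈ T, ∑ t ∈ T, X s t := Finset.sum_comm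
  nlinarith [expand1, h2, hsplit, hcomm]

/-- Let `p` and `q` be polynomials in one variable with nonnegative real coefficients
such that the coefficient sequence of each is log-concave and has no internal zeros.
Then the coefficient sequence of the product `p * q` is also log-concave with no
internal zeros. -/
theorem mul_logConcave_noInternalZeros (p q : Polynomial ℝ)
    (hp0 : HasNonnegCoeffs p) (hq0 : HasNonnegCoeffs q)
    (hp1 : HasLogConcaveCoeffs p) (hq1 : HasLogConcaveCoeffs q)
    (hp2 : HasNoInternalZeros p) (hq2 : HasNoInternalZeros q) :
    HasLogConcaveCoeffs (p * q) ∧ HasNoInternalZeros (p * q) := by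
  constructor
  · -- log-concavity
    intro n hn
    set M := p.natDegree + n + 1 with hM
    have e_f : ∀ (m : ℕ) (mz : ℤ), mz = (m:ℤ) → m < M + 1 →
        (p * q).coeff m = ∑ s ∈ Finset.range (M+1), pext p s * pext q (mz - s) := by
      intro m mz hmz hmN
      subst hmz
      rw [Polynomial.coeff_mul, Finset.Nat.sum_antidiagonal_eq_sum_range_succ_mk]
      calc ∑ s ∈ Finset.range (m+1), p.coeff s * q.coeff (m - s)
          = ∑ s ∈ Finset.range (m+1), pext p s * pext q ((m:ℤ) - s) := by
            refine Finset.sum_congr rfl fun s hs => ?_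
            rw [Finset.mem_range] at hs
            rw [pext_nat]
            congr 1
            have h1 : (0:ℤ) ≤ (m:ℤ) - s := by omega
            have h2 : ((m:ℤ) - s).toNat = m - s := by omega
            rw [show pext q ((m:ℤ) - s) = q.coeff ((m:ℤ) - s).toNat from if_pos h1, h2]
        _ = ∑ s ∈ Finset.range (M+1), pext p s * pext q ((m:ℤ) - s) := by
            refine Finset.sum_subset (Finset.range_subset_range.2 (by omega)) fun s hsN hsm => ?_
            rw [Finset.mem_range] at hsN
            simp only [Finset.mem_range, not_lt] at hsm
            rw [pext_neg q (by omega), mul_zero]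
    have e_g : ∀ (m : ℕ) (mz : ℤ), mz = (m:ℤ) → 0 < m → m < M + 1 →
        (p * q).coeff (m-1) = ∑ s ∈ Finset.range (M+1), pext p ((s:ℤ) - 1) * pext q (mz - s) := by
      intro m mz hmz h0m hmN
      subst hmz
      rw [e_f (m-1) ((m:ℤ)-1) (by omega) (by omega)]
      have z1 : pext p ((M:ℕ):ℤ) = 0 := by
        rw [pext_nat]
        exact Polynomial.coeff_eq_zero_of_natDegree_lt (by omega)
      have z2 : pext p (((0:ℕ):ℤ) - 1) = 0 := pext_neg p (by norm_num)
      calc ∑ s ∈ Finset.range (M+1), pext p ↑s * pext q ((↑m - 1) - ↑s)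
          = ∑ s ∈ Finset.range M, pext p ↑s * pext q ((↑m - 1) - ↑s) := by
            rw [Finset.sum_range_succ, z1, zero_mul, add_zero]
        _ = ∑ s ∈ Finset.range M, pext p (↑(s+1) - 1) * pext q (↑m - ↑(s+1)) := by
            refine Finset.sum_congr rfl fun s _ => ?_
            congr 1
            · congr 1; push_cast; ring
            · congr 1; push_cast; ring
        _ = ∑ s ∈ Finset.range (M+1), pext p (↑s - 1) * pext q (↑m - ↑s) := by
            rw [Finset.sum_range_succ' (fun s => pext p (↑s - 1) * pext q (↑m - ↑s)) M]
            simp only [z2, zero_mul, add_zero]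
    have det := det_nonneg (pext p) (pext q)
      (pext_strong p hp0 hp1 hp2) (pext_strong q hq0 hq1 hq2) (Finset.range (M+1)) (n:ℤ)
    have v1 := e_g n (n:ℤ) rfl hn (by omega)
    have v2 := e_f (n+1) ((n:ℤ)+1) (by push_cast; ring) (by omega)
    have v3 := e_f n (n:ℤ) rfl (by omega)
    have v4 := e_g (n+1) ((n:ℤ)+1) (by push_cast; ring) (by omega) (by omega)
    rw [Nat.add_sub_cancel] at v4
    rw [v1, v2, mul_comm, sq]
    nth_rewrite 1 [v3]
    rw [v4]
    exact det
  · -- no internal zeros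
    intro i j k hij hjk hi hk
    have hexist : ∀ m : ℕ, (p * q).coeff m ≠ 0 →
        ∃ s, s ≤ m ∧ p.coeff s ≠ 0 ∧ q.coeff (m - s) ≠ 0 := by
      intro m hm
      rw [Polynomial.coeff_mul, Finset.Nat.sum_antidiagonal_eq_sum_range_succ_mk] at hm
      obtain ⟨s, hs, hne⟩ := Finset.exists_ne_zero_of_sum_ne_zero hm
      rw [Finset.mem_range] at hs
      exact ⟨s, by omega, fun h => hne (by rw [h, zero_mul]),
        fun h => hne (by rw [h, mul_zero])⟩
    obtain ⟨s, hsi, hps, hqs⟩ := hexist i hi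
    obtain ⟨t, htk, hpt, hqt⟩ := hexist k hk
    set u := min (max s t) (j - min (i - s) (k - t)) with hu
    have hu1 : min s t ≤ u := by omega
    have hu2 : u ≤ max s t := by omega
    have huj : u ≤ j := by omega
    have hv1 : min (i - s) (k - t) ≤ j - u := by omega
    have hv2 : j - u ≤ max (i - s) (k - t) := by omega
    have hpu : p.coeff u ≠ 0 := between_ne p.coeff hp2 hps hpt hu1 hu2
    have hqu : q.coeff (j - u) ≠ 0 := between_ne q.coeff hq2 hqs hqt hv1 hv2
    have hpos : 0 < (p * q).coeff j := by
      rw [Polynomial.coeff_mul, Finset.Nat.sum_antidiagonal_eq_sum_range_succ_mk]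
      refine Finset.sum_pos' (fun v _ => mul_nonneg (hp0 v) (hq0 _)) ⟨u, Finset.mem_range.2 (by omega), ?_⟩
      exact lt_of_le_of_ne (mul_nonneg (hp0 u) (hq0 _)) (Ne.symm (mul_ne_zero hpu hqu))
    exact hpos.ne'
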